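/- arXiv:2102.05324 — 2 statements merged into one kernel-verified Lean document; each statement's English description precedes it below -/
import Mathlib

section
/- Let K be a complete discretely valued field and f an endomorphism of a finite-dimensional K-vector space V. For a real number s, factor the characteristic polynomial χ_f = χ_Big · χ_Small, where χ_Big gathers the roots (in an algebraic closure) of valuation < s and χ_Small those of valuation ≥ s. Then both factors have coefficients in K, and V decomposes as the direct sum V = ker(χ_Big(f)) ⊕ ker(χ_Small(f)). -/
open scoped NNReal

/-- `π` is a uniformizer of the complete discretely valued field `K`. -/
def IsUniformizer (K : Type*) [Field K] [Valued K ℝ≥0] (π : K) : Prop :=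
  Valued.v π ≠ 0 ∧ Valued.v π < 1 ∧ ∀ x : K, x ≠ 0 → ∃ k : ℤ, Valued.v x = Valued.v π ^ k

/-- The (additive, ℝ-valued) valuation associated to a multiplicative `ℝ≥0`-valuation `w`,
normalized so that the uniformizer `π` has valuation `1`. -/
noncomputable def addValOf {K : Type*} [Field K] [Valued K ℝ≥0] (π : K)
    {A : Type*} [Ring A] (w : Valuation A ℝ≥0) (x : A) : ℝ :=
  Real.logb ((Valued.v π : ℝ≥0) : ℝ) ((w x : ℝ≥0) : ℝ)

/-- The valuation of a finite sum is at most the (real) sum of the valuations. -/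
lemma val_sum_le {L : Type*} [CommRing L] (w : Valuation L ℝ≥0) {ι : Type*} (t : Finset ι)
    (g : ι → L) : ((w (∑ i ∈ t, g i) : ℝ≥0) : ℝ) ≤ ∑ i ∈ t, ((w (g i) : ℝ≥0) : ℝ) := by
  classical
  induction t using Finset.induction with
  | empty => simp
  | @insert a t ha ih =>
    rw [Finset.sum_insert ha, Finset.sum_insert ha]
    calc ((w (g a + ∑ i ∈ t, g i) : ℝ≥0) : ℝ)
        ≤ max ((w (g a) : ℝ≥0) : ℝ) ((w (∑ i ∈ t, g i) : ℝ≥0) : ℝ) := by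
          exact_mod_cast w.map_add (g a) (∑ i ∈ t, g i)
      _ ≤ ((w (g a) : ℝ≥0) : ℝ) + ((w (∑ i ∈ t, g i) : ℝ≥0) : ℝ) :=
          max_le (le_add_of_nonneg_right (by positivity)) (le_add_of_nonneg_left (by positivity))
      _ ≤ ((w (g a) : ℝ≥0) : ℝ) + ∑ i ∈ t, ((w (g i) : ℝ≥0) : ℝ) := by
          exact add_le_add_right ih _

set_option synthInstance.maxHeartbeats 1000000 in
set_option maxHeartbeats 2000000 in
/-- Over a complete rank-one valued field, extensions of the valuation to a finite
field extension are unique: comparison in one direction. -/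
theorem valuation_ext_le {K : Type*} [Field K] [hvK : Valued K ℝ≥0] [CompleteSpace K]
    (π : K) (hπ : IsUniformizer K π)
    {L : Type*} [Field L] [Algebra K L] [FiniteDimensional K L]
    (w1 w2 : Valuation L ℝ≥0)
    (h1 : ∀ x : K, w1 (algebraMap K L x) = Valued.v x)
    (h2 : ∀ x : K, w2 (algebraMap K L x) = Valued.v x) (x : L) :
    w2 x ≤ w1 x := by
  classical
  letI : Valuation.RankOne (hvK.v) :=
    { hom' := MonoidWithZeroHom.ValueGroup₀.embedding
      strictMono' := MonoidWithZeroHom.ValueGroup₀.embedding_strictMono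
      exists_val_nontrivial := ⟨π, hπ.1, ne_of_lt hπ.2.1⟩ }
  letI : NontriviallyNormedField K := Valued.toNontriviallyNormedField K ℝ≥0
  letI : Valued L ℝ≥0 := Valued.mk' w1
  have hLv : (Valued.v : Valuation L ℝ≥0) = w1 := rfl
  letI : Valuation.RankOne (Valued.v : Valuation L ℝ≥0) :=
    { hom' := MonoidWithZeroHom.ValueGroup₀.embedding
      strictMono' := MonoidWithZeroHom.ValueGroup₀.embedding_strictMono
      exists_val_nontrivial := ⟨algebraMap K L π, by
        rw [hLv, h1]; exact ⟨hπ.1, ne_of_lt hπ.2.1⟩⟩ }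
  letI : NormedField L := Valued.toNormedField L ℝ≥0
  have hnormL : ∀ y : L, ‖y‖ = ((w1 y : ℝ≥0) : ℝ) := fun y => congrArg NNReal.toReal (Valuation.embedding_restrict w1 y)
  have hnormK : ∀ c : K, ‖c‖ = ((Valued.v c : ℝ≥0) : ℝ) := fun c => congrArg NNReal.toReal (Valuation.embedding_restrict hvK.v c)
  letI : NormedSpace K L :=
    { norm_smul_le := fun c y => by
        rw [Algebra.smul_def, hnormL, hnormK, hnormL, map_mul, h1]
        push_cast
        exact le_of_eq rfl }
  obtain ⟨C, hC0, hC⟩ : ∃ C : ℝ, 0 < C ∧ ∀ y : L, ((w2 y : ℝ≥0) : ℝ) ≤ C * ‖y‖ := by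
    let b := Module.finBasis K L
    haveI : ContinuousSMul K L := inferInstance
    let φ : Fin (Module.finrank K L) → (L →L[K] K) := fun i =>
      LinearMap.toContinuousLinearMap (b.coord i)
    refine ⟨(∑ i, ‖φ i‖ * ((w2 (b i) : ℝ≥0) : ℝ)) + 1, by positivity, fun y => ?_⟩
    have hy : (∑ i, b.repr y i • b i) = y := b.sum_repr y
    calc ((w2 y : ℝ≥0) : ℝ) = ((w2 (∑ i, b.repr y i • b i) : ℝ≥0) : ℝ) := by rw [hy]
      _ ≤ ∑ i, ((w2 (b.repr y i • b i) : ℝ≥0) : ℝ) := val_sum_le w2 _ _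
      _ = ∑ i, ((Valued.v (b.repr y i) : ℝ≥0) : ℝ) * ((w2 (b i) : ℝ≥0) : ℝ) := by
          refine Finset.sum_congr rfl fun i _ => ?_
          rw [Algebra.smul_def, map_mul, h2]
          push_cast
          ring
      _ ≤ ∑ i, (‖φ i‖ * ‖y‖) * ((w2 (b i) : ℝ≥0) : ℝ) := by
          refine Finset.sum_le_sum fun i _ => ?_
          have hb : ‖(φ i) y‖ ≤ ‖φ i‖ * ‖y‖ := (φ i).le_opNorm y
          have hco : (φ i) y = b.repr y i := by
            show (b.coord i) y = b.repr y i
            exact b.coord_apply i y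
          rw [hco, hnormK] at hb
          exact mul_le_mul_of_nonneg_right hb (by positivity)
      _ = (∑ i, ‖φ i‖ * ((w2 (b i) : ℝ≥0) : ℝ)) * ‖y‖ := by
          rw [Finset.sum_mul]
          exact Finset.sum_congr rfl fun i _ => by ring
      _ ≤ ((∑ i, ‖φ i‖ * ((w2 (b i) : ℝ≥0) : ℝ)) + 1) * ‖y‖ := by
          have h0 : (0:ℝ) ≤ ‖y‖ := norm_nonneg y
          nlinarith
  by_cases hx0 : x = 0
  · simp [hx0]
  have hw1x : w1 x ≠ 0 := fun h => hx0 (w1.zero_iff.mp h)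
  have ha : (0:ℝ) < ((w1 x : ℝ≥0) : ℝ) := by
    exact_mod_cast pos_iff_ne_zero.mpr hw1x
  have key : ∀ m : ℕ, ((w2 x : ℝ≥0) : ℝ) ^ m ≤ C * ((w1 x : ℝ≥0) : ℝ) ^ m := by
    intro m
    have := hC (x ^ m)
    rwa [map_pow, hnormL, map_pow, NNReal.coe_pow, NNReal.coe_pow] at this
  rw [← NNReal.coe_le_coe]
  by_contra hlt
  push_neg at hlt
  have hr : 1 < ((w2 x : ℝ≥0) : ℝ) / ((w1 x : ℝ≥0) : ℝ) := (one_lt_div ha).mpr hlt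
  obtain ⟨m, hm⟩ := pow_unbounded_of_one_lt C hr
  rw [div_pow] at hm
  have hle : (((w2 x : ℝ≥0) : ℝ)) ^ m / (((w1 x : ℝ≥0) : ℝ)) ^ m ≤ C :=
    (div_le_iff₀ (pow_pos ha m)).mpr (key m)
  exact absurd (lt_of_lt_of_le hm hle) (lt_irrefl C)

/-- Uniqueness of the extension of the valuation to a finite extension. -/
theorem valuation_ext_unique {K : Type*} [Field K] [Valued K ℝ≥0] [CompleteSpace K]
    (π : K) (hπ : IsUniformizer K π)
    {L : Type*} [Field L] [Algebra K L] [FiniteDimensional K L]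
    (w1 w2 : Valuation L ℝ≥0)
    (h1 : ∀ x : K, w1 (algebraMap K L x) = Valued.v x)
    (h2 : ∀ x : K, w2 (algebraMap K L x) = Valued.v x) :
    w1 = w2 :=
  Valuation.ext fun x => le_antisymm
    (valuation_ext_le π hπ w2 w1 h2 h1 x) (valuation_ext_le π hπ w1 w2 h1 h2 x)

/-- Conjugate elements of the algebraic closure have equal valuation. -/
theorem val_conj_eq {K : Type*} [Field K] [Valued K ℝ≥0] [CompleteSpace K]
    (π : K) (hπ : IsUniformizer K π)
    (w : Valuation (AlgebraicClosure K) ℝ≥0)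
    (hw : ∀ x : K, w (algebraMap K (AlgebraicClosure K) x) = Valued.v x)
    {g : Polynomial K} (hg : Irreducible g) {ρ ρ' : AlgebraicClosure K}
    (hρ : Polynomial.aeval ρ g = 0) (hρ' : Polynomial.aeval ρ' g = 0) :
    w ρ = w ρ' := by
  letI : Fact (Irreducible g) := ⟨hg⟩
  haveI : FiniteDimensional K (AdjoinRoot g) :=
    Module.Finite.of_basis (AdjoinRoot.powerBasis hg.ne_zero).basis
  have h := valuation_ext_unique π hπ
    (w.comap (AdjoinRoot.liftAlgHom g (Algebra.ofId K _) ρ hρ).toRingHom)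
    (w.comap (AdjoinRoot.liftAlgHom g (Algebra.ofId K _) ρ' hρ').toRingHom)
    (fun x => by
      simp only [Valuation.comap_apply, AlgHom.toRingHom_eq_coe, RingHom.coe_coe]
      rw [AlgHom.commutes, hw])
    (fun x => by
      simp only [Valuation.comap_apply, AlgHom.toRingHom_eq_coe, RingHom.coe_coe]
      rw [AlgHom.commutes, hw])
  have h2 := congrArg (fun W : Valuation (AdjoinRoot g) ℝ≥0 => W (AdjoinRoot.root g)) h
  simp only [Valuation.comap_apply, AlgHom.toRingHom_eq_coe, RingHom.coe_coe] at h2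
  rwa [AdjoinRoot.liftAlgHom_root g (Algebra.ofId K (AlgebraicClosure K)) ρ hρ,
    AdjoinRoot.liftAlgHom_root g (Algebra.ofId K (AlgebraicClosure K)) ρ' hρ'] at h2

open Polynomial in
/-- Roots of a product of monic polynomials are roots of one of the factors. -/
lemma mem_roots_of_mem_roots_prod {K A : Type*} [Field K] [Field A] [Algebra K A]
    {t : Multiset (Polynomial K)} (ht : ∀ g ∈ t, g.Monic) {ρ : A}
    (hρ : ρ ∈ (t.prod.map (algebraMap K A)).roots) :
    ∃ g ∈ t, ρ ∈ (g.map (algebraMap K A)).roots := by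
  classical
  have h0 : (0 : Polynomial A) ∉ t.map (Polynomial.map (algebraMap K A)) := by
    intro hmem
    obtain ⟨g, hg, hg0⟩ := Multiset.mem_map.mp hmem
    exact ((ht g hg).map (algebraMap K A)).ne_zero hg0
  have hmap : t.prod.map (algebraMap K A) = (t.map (Polynomial.map (algebraMap K A))).prod := by
    simpa using map_multiset_prod (Polynomial.mapRingHom (algebraMap K A)) t
  rw [hmap, Polynomial.roots_multiset_prod _ h0, Multiset.mem_bind] at hρ
  obtain ⟨q, hq, hρq⟩ := hρ
  obtain ⟨g, hg, rfl⟩ := Multiset.mem_map.mp hq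
  exact ⟨g, hg, hρq⟩

/-- The product of a multiset of monic polynomials is monic. -/
lemma monic_msprod {K : Type*} [CommRing K] {t : Multiset (Polynomial K)}
    (h : ∀ g ∈ t, g.Monic) : t.prod.Monic := by
  simpa using Polynomial.monic_multiset_prod_of_monic t id h

/-- Two distinct monic irreducible polynomials over a field are coprime. -/
lemma coprime_of_irreducible_monic_ne {K : Type*} [Field K] {g h : Polynomial K}
    (hg : Irreducible g) (hh : Irreducible h) (hgm : g.Monic) (hhm : h.Monic)
    (hne : g ≠ h) : IsCoprime g h := by
  classical
  by_contra hnc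
  have hdu : ¬ IsUnit (EuclideanDomain.gcd g h) := fun hu =>
    hnc (EuclideanDomain.gcd_isUnit_iff.mp hu)
  obtain ⟨c, hc⟩ := EuclideanDomain.gcd_dvd_left g h
  have hassoc : Associated (EuclideanDomain.gcd g h) g := by
    rcases hg.isUnit_or_isUnit hc with h1 | h1
    · exact absurd h1 hdu
    · exact ⟨h1.unit, by rw [h1.unit_spec, ← hc]⟩
  have hgh : g ∣ h := hassoc.symm.dvd.trans (EuclideanDomain.gcd_dvd_right g h)
  exact hne (Polynomial.eq_of_monic_of_associated hgm hhm (hg.associated_of_dvd hh hgh))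

/-- A product over a multiset is coprime to `x` if each factor is. -/
lemma isCoprime_multiset_prod {R : Type*} [CommSemiring R] {t : Multiset R} {x : R}
    (h : ∀ a ∈ t, IsCoprime a x) : IsCoprime t.prod x := by
  induction t using Multiset.induction with
  | empty => simpa using isCoprime_one_left
  | cons a t ih =>
    rw [Multiset.prod_cons]
    exact (h a (Multiset.mem_cons_self a t)).mul_left
      (ih fun b hb => h b (Multiset.mem_cons_of_mem hb))

/-- Slope decomposition: for a real number `s`, the characteristic
polynomial of `f` factors as `χ_f = χ_Big ⬝ χ_Small` over `K`, where the roots of `χ_Big`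
in an algebraic closure have valuation `< s` and those of `χ_Small` have valuation `≥ s`,
and `V` decomposes as `V = ker(χ_Big(f)) ⊕ ker(χ_Small(f))`. -/
theorem slope_decomposition
    {K : Type*} [Field K] [Valued K ℝ≥0] [CompleteSpace K]
    (π : K) (hπ : IsUniformizer K π)
    (w : Valuation (AlgebraicClosure K) ℝ≥0)
    (hw : ∀ x : K, w (algebraMap K (AlgebraicClosure K) x) = Valued.v x)
    {V : Type*} [AddCommGroup V] [Module K V] [FiniteDimensional K V]
    (f : V →ₗ[K] V) (s : ℝ) :
    ∃ χBig χSmall : Polynomial K,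
      χBig.Monic ∧ χSmall.Monic ∧
      LinearMap.charpoly f = χBig * χSmall ∧
      (∀ ρ ∈ (χBig.map (algebraMap K (AlgebraicClosure K))).roots,
        ρ ≠ 0 ∧ addValOf π w ρ < s) ∧
      (∀ ρ ∈ (χSmall.map (algebraMap K (AlgebraicClosure K))).roots,
        ρ = 0 ∨ s ≤ addValOf π w ρ) ∧
      IsCompl (LinearMap.ker (Polynomial.aeval f χBig))
              (LinearMap.ker (Polynomial.aeval f χSmall)) := by
  classical
  set A := AlgebraicClosure K
  set χ := LinearMap.charpoly f with hχdef
  have hχm : χ.Monic := LinearMap.charpoly_monic f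
  set M := UniqueFactorizationMonoid.normalizedFactors χ with hMdef
  have hMmonic : ∀ g ∈ M, g.Monic := by
    intro g hg
    have hgirr := UniqueFactorizationMonoid.irreducible_of_normalized_factor g hg
    have := UniqueFactorizationMonoid.normalize_normalized_factor g hg
    rw [← this]
    exact Polynomial.monic_normalize hgirr.ne_zero
  have hMirr : ∀ g ∈ M, Irreducible g :=
    fun g hg => UniqueFactorizationMonoid.irreducible_of_normalized_factor g hg
  have hMprod : M.prod = χ :=
    Polynomial.eq_of_monic_of_associated (monic_msprod hMmonic) hχm
      (UniqueFactorizationMonoid.prod_normalizedFactors hχm.ne_zero)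
  set P : Polynomial K → Prop := fun g =>
    ∀ ρ ∈ (g.map (algebraMap K A)).roots, ρ ≠ 0 ∧ addValOf π w ρ < s with hPdef
  set B := M.filter P with hBdef
  set S := M.filter (fun g => ¬ P g) with hSdef
  have hBM : ∀ g ∈ B, g ∈ M := fun g hg => (Multiset.mem_filter.mp hg).1
  have hSM : ∀ g ∈ S, g ∈ M := fun g hg => (Multiset.mem_filter.mp hg).1
  have hprodBS : B.prod * S.prod = χ := by
    rw [← Multiset.prod_add, Multiset.filter_add_not P M, hMprod]
  have hBmonic : B.prod.Monic := monic_msprod fun g hg => hMmonic g (hBM g hg)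
  have hSmonic : S.prod.Monic := monic_msprod fun g hg => hMmonic g (hSM g hg)
  -- all roots of an irreducible factor have the same valuation
  have hconj : ∀ g ∈ M, ∀ ρ ∈ (g.map (algebraMap K A)).roots,
      ∀ ρ' ∈ (g.map (algebraMap K A)).roots, w ρ = w ρ' := by
    intro g hg ρ hρ ρ' hρ'
    have h1 := (Polynomial.mem_roots'.mp hρ).2
    have h2 := (Polynomial.mem_roots'.mp hρ').2
    refine val_conj_eq π hπ w hw (hMirr g hg) ?_ ?_
    · rwa [Polynomial.aeval_def, Polynomial.eval₂_eq_eval_map]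
    · rwa [Polynomial.aeval_def, Polynomial.eval₂_eq_eval_map]
  -- coprimality
  have hcop : IsCoprime B.prod S.prod := by
    refine isCoprime_multiset_prod fun g hg => ?_
    refine (isCoprime_multiset_prod fun h hh => ?_).symm
    -- goal : IsCoprime h g, with h ∈ S, g ∈ B
    have hne : h ≠ g := by
      intro he
      exact (Multiset.mem_filter.mp hh).2 (he ▸ (Multiset.mem_filter.mp hg).2)
    exact coprime_of_irreducible_monic_ne (hMirr h (hSM h hh)) (hMirr g (hBM g hg))
      (hMmonic h (hSM h hh)) (hMmonic g (hBM g hg)) hne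
  refine ⟨B.prod, S.prod, hBmonic, hSmonic, hprodBS.symm, ?_, ?_, ?_⟩
  · -- Big roots
    intro ρ hρ
    obtain ⟨g, hg, hρg⟩ := mem_roots_of_mem_roots_prod
      (fun g hg => hMmonic g (hBM g hg)) hρ
    exact (Multiset.mem_filter.mp hg).2 ρ hρg
  · -- Small roots
    intro ρ hρ
    obtain ⟨g, hg, hρg⟩ := mem_roots_of_mem_roots_prod
      (fun g hg => hMmonic g (hSM g hg)) hρ
    have hgM := hSM g hg
    have hnP : ¬ ∀ ρ ∈ (g.map (algebraMap K A)).roots, ρ ≠ 0 ∧ addValOf π w ρ < s :=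
      (Multiset.mem_filter.mp hg).2
    push_neg at hnP
    obtain ⟨ρ0, hρ0, hρ0cond⟩ := hnP
    have hweq : w ρ = w ρ0 := hconj g hgM ρ hρg ρ0 hρ0
    by_cases hρz : ρ = 0
    · exact Or.inl hρz
    · right
      have hρ0z : ρ0 ≠ 0 := by
        intro h0
        apply hρz
        rw [← w.zero_iff]
        rw [hweq, h0, map_zero]
      have : addValOf π w ρ = addValOf π w ρ0 := by
        unfold addValOf
        rw [hweq]
      rw [this]
      exact hρ0cond hρ0z
  · -- IsCompl
    have hdisj : Disjoint (LinearMap.ker (Polynomial.aeval f B.prod))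
        (LinearMap.ker (Polynomial.aeval f S.prod)) := by
      rw [Submodule.disjoint_def]
      intro v hv1 hv2
      obtain ⟨a, b, hab⟩ := hcop
      have := congr_arg (fun p : Polynomial K => Polynomial.aeval f p v) hab
      simp only [map_add, map_mul, Polynomial.aeval_one, LinearMap.add_apply,
        Module.End.mul_apply, LinearMap.mem_ker.mp hv1, LinearMap.mem_ker.mp hv2, map_zero,
        add_zero, Module.End.one_apply] at this
      exact this.symm
    have hsup := Polynomial.sup_ker_aeval_eq_ker_aeval_mul_of_coprime f hcop
    rw [hprodBS] at hsup
    have hker : LinearMap.ker (Polynomial.aeval f χ) = ⊤ := by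
      rw [hχdef, LinearMap.aeval_self_charpoly]
      exact LinearMap.ker_zero
    refine ⟨hdisj, codisjoint_iff.mpr ?_⟩
    rw [hsup, hker]
end

section
/- Let K be a complete discretely valued field, V a finite-dimensional K-vector space, f : V → V a K-linear endomorphism, and L ⊆ V a finitely generated K°-submodule that spans V as a K-vector space. Then the saturation of L under f satisfies Sat_f(L) = Big_0(f) + L + f(L) + ⋯ + f^{dim V − 1}(L), where Big_0(f) is the sum of generalized eigenspaces of f for eigenvalues of negative valuation. -/
open scoped NNReal

/-- The ring of integers `K°` acts on any `K`-vector space. -/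
noncomputable instance moduleInt {K : Type*} [Field K] [Valued K ℝ≥0]
    {V : Type*} [AddCommGroup V] [Module K V] :
    Module (Valued.v.integer : Subring K) V :=
  Module.compHom V (Valued.v.integer : Subring K).subtype

/-- The scalar tower `K° → K → V` (found automatically by the older Mathlib). -/
instance isScalarTowerInt {K : Type*} [Field K] [Valued K ℝ≥0]
    {V : Type*} [AddCommGroup V] [Module K V] :
    IsScalarTower (Valued.v.integer : Subring K) K V :=
  ⟨fun a b v => mul_smul (a : K) b v⟩

/-- A `K`-linear endomorphism, viewed as `K°`-linear. -/
noncomputable def restrictO {K : Type*} [Field K] [Valued K ℝ≥0]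
    {V : Type*} [AddCommGroup V] [Module K V] (f : V →ₗ[K] V) :
    V →ₗ[(Valued.v.integer : Subring K)] V where
  toFun := f
  map_add' := f.map_add
  map_smul' := fun c x => f.map_smul (c : K) x

/-! ### Auxiliary lemmas -/

open Polynomial

section MultisetHelpers

variable {A : Type*} [CommRing A] (w : Valuation A ℝ≥0)

lemma aux_wsum_le {s : Multiset A} {B : ℝ≥0} (h : ∀ x ∈ s, w x ≤ B) : w s.sum ≤ B := by
  induction s using Multiset.induction with
  | empty => simpa using zero_le B
  | cons a t ih =>
      rw [Multiset.sum_cons]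
      refine le_trans (w.map_add _ _) (max_le (h a (Multiset.mem_cons_self a t)) ?_)
      exact ih fun x hx => h x (Multiset.mem_cons_of_mem hx)

lemma aux_wsum_lt {s : Multiset A} {B : ℝ≥0} (hB : 0 < B) (h : ∀ x ∈ s, w x < B) :
    w s.sum < B := by
  induction s using Multiset.induction with
  | empty => simpa using hB
  | cons a t ih =>
      rw [Multiset.sum_cons]
      refine lt_of_le_of_lt (w.map_add _ _) (max_lt (h a (Multiset.mem_cons_self a t)) ?_)
      exact ih fun x hx => h x (Multiset.mem_cons_of_mem hx)

lemma aux_wprod_eq (s : Multiset A) : w s.prod = ((s.map w).prod) := by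
  rw [← map_multiset_prod]

lemma aux_one_le_mprod {s : Multiset ℝ≥0} (h : ∀ x ∈ s, 1 ≤ x) : 1 ≤ s.prod := by
  induction s using Multiset.induction with
  | empty => simp
  | cons a t ih =>
      rw [Multiset.prod_cons]
      exact one_le_mul (h a (Multiset.mem_cons_self a t))
        (ih fun x hx => h x (Multiset.mem_cons_of_mem hx))

lemma aux_one_lt_mprod {s : Multiset ℝ≥0} (h0 : s ≠ 0) (h : ∀ x ∈ s, 1 < x) : 1 < s.prod := by
  induction s using Multiset.induction with
  | empty => exact absurd rfl h0
  | cons a t ih =>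
      rw [Multiset.prod_cons]
      have h1 : 1 < a := h a (Multiset.mem_cons_self a t)
      have h2 : (1:ℝ≥0) ≤ t.prod :=
        aux_one_le_mprod fun x hx => le_of_lt (h x (Multiset.mem_cons_of_mem hx))
      exact lt_of_lt_of_le h1 (le_mul_of_one_le_right zero_le h2)

lemma aux_mprod_le_one {s : Multiset ℝ≥0} (h : ∀ x ∈ s, x ≤ 1) : s.prod ≤ 1 := by
  induction s using Multiset.induction with
  | empty => simp
  | cons a t ih =>
      rw [Multiset.prod_cons]
      exact mul_le_one' (h a (Multiset.mem_cons_self a t))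
        (ih fun x hx => h x (Multiset.mem_cons_of_mem hx))

end MultisetHelpers

section Discreteness

variable {K : Type*} [Field K] [Valued K ℝ≥0]

lemma aux_val_le_pi (π : K) (hπ : IsUniformizer K π) {c : K}
    (h : Valued.v c < 1) : Valued.v c ≤ Valued.v π := by
  obtain ⟨hπ0, hπ1, hdisc⟩ := hπ
  rcases eq_or_ne c 0 with rfl | hc
  · simp
  obtain ⟨k, hk⟩ := hdisc c hc
  have hpos : (0:ℝ≥0) < Valued.v π := lt_of_le_of_ne zero_le (Ne.symm hπ0)
  have hanti := zpow_right_strictAnti₀ hpos hπ1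
  have hk0 : 0 < k := by
    by_contra hle
    push_neg at hle
    have h1 : (1:ℝ≥0) ≤ Valued.v π ^ k := by simpa using hanti.antitone hle
    rw [hk] at h
    exact absurd (lt_of_le_of_lt h1 h) (lt_irrefl _)
  have h2 : Valued.v π ^ k ≤ Valued.v π ^ (1:ℤ) := hanti.antitone hk0
  simpa [hk] using h2

end Discreteness

section RootBounds

variable {K : Type*} [Field K] [Valued K ℝ≥0] (π : K)
  (w : Valuation (AlgebraicClosure K) ℝ≥0)

lemma aux_base_facts (hπ0 : Valued.v π ≠ 0) (hπ1 : Valued.v π < 1) :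
    (0:ℝ) < ((Valued.v π : ℝ≥0) : ℝ) ∧ ((Valued.v π : ℝ≥0) : ℝ) < 1 := by
  constructor
  · exact_mod_cast lt_of_le_of_ne zero_le (Ne.symm hπ0)
  · exact_mod_cast hπ1

lemma aux_root_big (hπ0 : Valued.v π ≠ 0) (hπ1 : Valued.v π < 1)
    {ρ : AlgebraicClosure K} (h : addValOf π w ρ < 0) : 1 < w ρ := by
  obtain ⟨hb0, hb1⟩ := aux_base_facts π hπ0 hπ1
  have hlogb : Real.log ((Valued.v π : ℝ≥0) : ℝ) < 0 := Real.log_neg hb0 hb1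
  rw [addValOf, Real.logb, div_neg_iff] at h
  have hlog : 0 < Real.log ((w ρ : ℝ≥0) : ℝ) := by
    rcases h with ⟨h1, _⟩ | ⟨_, h2⟩
    · exact h1
    · exact absurd h2 (not_lt.mpr (le_of_lt hlogb))
  have hgt : (1:ℝ) < ((w ρ : ℝ≥0) : ℝ) := by
    by_contra hle
    push_neg at hle
    exact absurd (Real.log_nonpos (by positivity) hle) (not_le.mpr hlog)
  exact_mod_cast hgt

lemma aux_root_small (hπ0 : Valued.v π ≠ 0) (hπ1 : Valued.v π < 1)
    {ρ : AlgebraicClosure K} (h : 0 ≤ addValOf π w ρ) : w ρ ≤ 1 := by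
  obtain ⟨hb0, hb1⟩ := aux_base_facts π hπ0 hπ1
  have hlogb : Real.log ((Valued.v π : ℝ≥0) : ℝ) < 0 := Real.log_neg hb0 hb1
  rw [addValOf, Real.logb] at h
  have hlog : Real.log ((w ρ : ℝ≥0) : ℝ) ≤ 0 := by
    rcases (div_nonneg_iff.mp h) with ⟨h1, h2⟩ | ⟨h1, _⟩
    · exact absurd h2 (not_le.mpr hlogb)
    · exact h1
  have hle : ((w ρ : ℝ≥0) : ℝ) ≤ 1 := by
    by_contra hlt
    push_neg at hlt
    exact absurd (Real.log_pos hlt) (not_lt.mpr hlog)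
  exact_mod_cast hle

end RootBounds

section CoeffBounds

variable {K : Type*} [Field K] [Valued K ℝ≥0]
  (w : Valuation (AlgebraicClosure K) ℝ≥0)

lemma aux_coeff_val_eq (hw : ∀ x : K, w (algebraMap K (AlgebraicClosure K) x) = Valued.v x)
    (p : Polynomial K) (hp : p.Monic) {i : ℕ} (hi : i ≤ p.natDegree) :
    Valued.v (p.coeff i) =
      w ((p.map (algebraMap K (AlgebraicClosure K))).roots.esymm
        (Multiset.card (p.map (algebraMap K (AlgebraicClosure K))).roots - i)) := by
  set F := algebraMap K (AlgebraicClosure K)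
  set pm := p.map F with hpm
  have hsp : Splits pm := IsAlgClosed.splits pm
  have hcard : p.natDegree = Multiset.card pm.roots :=
    (Polynomial.natDegree_map (p := p) F).symm.trans hsp.natDegree_eq_card_roots
  have hprod : pm = (Multiset.map (fun a => X - C a) pm.roots).prod :=
    (IsAlgClosed.splits pm).eq_prod_roots_of_monic (hp.map F)
  have hcoeff : pm.coeff i =
      (-1) ^ (Multiset.card pm.roots - i) * pm.roots.esymm (Multiset.card pm.roots - i) := by
    conv_lhs => rw [hprod]
    exact Multiset.prod_X_sub_C_coeff pm.roots (hcard ▸ hi)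
  have h1 : Valued.v (p.coeff i) = w (pm.coeff i) := by
    rw [hpm, Polynomial.coeff_map, hw]
  rw [h1, hcoeff, map_mul, map_pow]
  have hneg : w (-1 : AlgebraicClosure K) = 1 := by
    rw [show (-1 : AlgebraicClosure K) = -(1) from rfl, w.map_neg, w.map_one]
  rw [hneg, one_pow, one_mul]

lemma aux_coeff_zero_val_eq
    (hw : ∀ x : K, w (algebraMap K (AlgebraicClosure K) x) = Valued.v x)
    (p : Polynomial K) (hp : p.Monic) :
    Valued.v (p.coeff 0) =
      (((p.map (algebraMap K (AlgebraicClosure K))).roots).map w).prod := by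
  set F := algebraMap K (AlgebraicClosure K)
  set pm := p.map F with hpm
  have hprod : pm = (Multiset.map (fun a => X - C a) pm.roots).prod :=
    (IsAlgClosed.splits pm).eq_prod_roots_of_monic (hp.map F)
  have h1 : Valued.v (p.coeff 0) = w (pm.coeff 0) := by
    rw [hpm, Polynomial.coeff_map, hw]
  have h2 : pm.coeff 0 = (pm.roots.map (fun a => -a)).prod := by
    conv_lhs => rw [hprod]
    rw [Polynomial.coeff_zero_eq_eval_zero, Polynomial.eval_multiset_prod, Multiset.map_map]
    congr 1
    apply Multiset.map_congr rfl
    intro a _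
    simp
  rw [h1, h2, aux_wprod_eq, Multiset.map_map]
  congr 1
  apply Multiset.map_congr rfl
  intro a _
  simp [w.map_neg]

/-- All coefficients of a monic polynomial whose roots have `w ≤ 1` are integral. -/
lemma aux_small_coeff_le_one
    (hw : ∀ x : K, w (algebraMap K (AlgebraicClosure K) x) = Valued.v x)
    (p : Polynomial K) (hp : p.Monic)
    (hroots : ∀ ρ ∈ (p.map (algebraMap K (AlgebraicClosure K))).roots, w ρ ≤ 1)
    (i : ℕ) : Valued.v (p.coeff i) ≤ 1 := by
  rcases le_or_gt i p.natDegree with hi | hi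
  · rw [aux_coeff_val_eq w hw p hp hi]
    set R := (p.map (algebraMap K (AlgebraicClosure K))).roots
    rw [Multiset.esymm]
    apply aux_wsum_le
    intro x hx
    obtain ⟨T, hT, rfl⟩ := Multiset.mem_map.mp hx
    have hTR : T ≤ R := (Multiset.mem_powersetCard.mp hT).1
    rw [aux_wprod_eq]
    apply aux_mprod_le_one
    intro y hy
    obtain ⟨ρ, hρ, rfl⟩ := Multiset.mem_map.mp hy
    exact hroots ρ (Multiset.mem_of_le hTR hρ)
  · rw [Polynomial.coeff_eq_zero_of_natDegree_lt hi, map_zero]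
    exact zero_le

/-- For a monic polynomial with all roots of `w > 1`: the constant coefficient strictly
dominates all other coefficients, and has value `> 1`. -/
lemma aux_big_coeff_lt
    (hw : ∀ x : K, w (algebraMap K (AlgebraicClosure K) x) = Valued.v x)
    (p : Polynomial K) (hp : p.Monic) (hd : 1 ≤ p.natDegree)
    (hroots : ∀ ρ ∈ (p.map (algebraMap K (AlgebraicClosure K))).roots, 1 < w ρ) :
    1 < Valued.v (p.coeff 0) ∧
      ∀ j, 1 ≤ j → Valued.v (p.coeff j) < Valued.v (p.coeff 0) := by
  set R := (p.map (algebraMap K (AlgebraicClosure K))).roots with hR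
  have hcard : p.natDegree = Multiset.card R :=
    (Polynomial.natDegree_map (p := p) (algebraMap K (AlgebraicClosure K))).symm.trans
      (IsAlgClosed.splits _).natDegree_eq_card_roots
  have hmapw : ∀ y ∈ R.map w, 1 < y := by
    intro y hy
    obtain ⟨ρ, hρ, rfl⟩ := Multiset.mem_map.mp hy
    exact hroots ρ hρ
  have hA0 : Valued.v (p.coeff 0) = (R.map w).prod := aux_coeff_zero_val_eq w hw p hp
  have hRne : R ≠ 0 := by
    intro h
    rw [h] at hcard
    simp at hcard
    omega
  have hA1 : 1 < (R.map w).prod := by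
    apply aux_one_lt_mprod
    · simpa using hRne
    · exact hmapw
  refine ⟨hA0 ▸ hA1, ?_⟩
  intro j hj
  rcases le_or_gt j p.natDegree with hjd | hjd
  · rw [aux_coeff_val_eq w hw p hp hjd, hA0, ← hR, Multiset.esymm]
    apply aux_wsum_lt
    · exact lt_trans zero_lt_one hA1
    intro x hx
    obtain ⟨T, hT, rfl⟩ := Multiset.mem_map.mp hx
    obtain ⟨hTR, hTcard⟩ := Multiset.mem_powersetCard.mp hT
    obtain ⟨U, hU⟩ := Multiset.le_iff_exists_add.mp hTR
    have hUcard : Multiset.card U = j := by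
      have hc := congrArg Multiset.card hU
      rw [Multiset.card_add] at hc
      rw [hTcard] at hc
      omega
    have hUne : U ≠ 0 := by
      intro h
      rw [h] at hUcard
      simp at hUcard
      omega
    rw [aux_wprod_eq]
    have hsplit : (R.map w).prod = (T.map w).prod * (U.map w).prod := by
      rw [hU, Multiset.map_add, Multiset.prod_add]
    have hTpos : 0 < (T.map w).prod := by
      refine lt_of_lt_of_le zero_lt_one (aux_one_le_mprod ?_)
      intro y hy
      obtain ⟨ρ, hρ, rfl⟩ := Multiset.mem_map.mp hy
      exact le_of_lt (hroots ρ (Multiset.mem_of_le hTR hρ))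
    have hUone : 1 < (U.map w).prod := by
      apply aux_one_lt_mprod
      · simpa using hUne
      intro y hy
      obtain ⟨ρ, hρ, rfl⟩ := Multiset.mem_map.mp hy
      have hρR : ρ ∈ R := by rw [hU]; exact Multiset.mem_add.mpr (Or.inr hρ)
      exact hroots ρ hρR
    rw [hsplit]
    exact (lt_mul_iff_one_lt_right hTpos).mpr hUone
  · rw [Polynomial.coeff_eq_zero_of_natDegree_lt hjd, map_zero, hA0]
    exact lt_trans zero_lt_one hA1

end CoeffBounds

lemma aux_coprime_of_disjoint_roots {K : Type*} [Field K]
    {L : Type*} [Field L] [IsAlgClosed L] (F : K →+* L)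
    {p q : Polynomial K} (hp : p.Monic) (hq : q.Monic)
    (h : ∀ ρ : L, ρ ∈ (p.map F).roots → ρ ∈ (q.map F).roots → False) :
    IsCoprime p q := by
  classical
  rw [← EuclideanDomain.gcd_isUnit_iff]
  by_contra hg
  set g := EuclideanDomain.gcd p q with hgdef
  have hgp : g ∣ p := EuclideanDomain.gcd_dvd_left p q
  have hgq : g ∣ q := EuclideanDomain.gcd_dvd_right p q
  have hg0 : g ≠ 0 := by
    intro h0
    exact hp.ne_zero (eq_zero_of_zero_dvd (h0 ▸ hgp))
  have hdeg : (g.map F).degree ≠ 0 := by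
    rw [Polynomial.degree_map_eq_of_injective F.injective]
    intro h0
    exact hg (Polynomial.isUnit_iff_degree_eq_zero.mpr h0)
  obtain ⟨ρ, hρ⟩ := IsAlgClosed.exists_root (g.map F) hdeg
  have hmem : ∀ {r : Polynomial K}, r.Monic → g ∣ r → ρ ∈ (r.map F).roots := by
    intro r hr hdvd
    rw [Polynomial.mem_roots ((hr.map F).ne_zero)]
    exact hρ.dvd (Polynomial.map_dvd F hdvd)
  exact h ρ (hmem hp hgp) (hmem hq hgq)

/-- If `L` is a finitely generated `K°`-submodule of `V` spanning `V`
over `K`, then `Sat_f(L) = Big_0(f) + L + f(L) + ⋯ + f^(dim V − 1)(L)`, where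
`Big_0(f) = ker(χ_Big(f))` for the factor `χ_Big` of the characteristic polynomial
gathering the roots of negative valuation. -/
theorem saturation_eq_big_add_partial_sums
    {K : Type*} [Field K] [Valued K ℝ≥0] [CompleteSpace K]
    (π : K) (hπ : IsUniformizer K π)
    (w : Valuation (AlgebraicClosure K) ℝ≥0)
    (hw : ∀ x : K, w (algebraMap K (AlgebraicClosure K) x) = Valued.v x)
    {V : Type*} [AddCommGroup V] [Module K V] [FiniteDimensional K V]
    (f : V →ₗ[K] V)
    (χBig χSmall : Polynomial K)
    (hBmonic : χBig.Monic) (hSmonic : χSmall.Monic)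
    (hfact : LinearMap.charpoly f = χBig * χSmall)
    (hBroots : ∀ ρ ∈ (χBig.map (algebraMap K (AlgebraicClosure K))).roots,
      ρ ≠ 0 ∧ addValOf π w ρ < 0)
    (hSroots : ∀ ρ ∈ (χSmall.map (algebraMap K (AlgebraicClosure K))).roots,
      ρ = 0 ∨ 0 ≤ addValOf π w ρ)
    (L : Submodule (Valued.v.integer : Subring K) V) (hL : L.FG)
    (hspan : Submodule.span K (L : Set V) = ⊤) :
    (⨆ k : ℕ, Submodule.map ((restrictO f) ^ k) L)
      = Submodule.restrictScalars (Valued.v.integer : Subring K)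
          (LinearMap.ker (Polynomial.aeval f χBig))
        ⊔ (⨆ k : Fin (Module.finrank K V), Submodule.map ((restrictO f) ^ (k : ℕ)) L) := by
  classical
  obtain ⟨hπ0, hπ1, hdisc⟩ := id hπ
  set O := (Valued.v.integer : Subring K) with hO
  have hπpos : (0:ℝ≥0) < Valued.v π := lt_of_le_of_ne zero_le (Ne.symm hπ0)
  have hπle : Valued.v π ≤ 1 := le_of_lt hπ1
  have hπne : π ≠ 0 := by
    intro h
    rw [h, map_zero] at hπ0
    exact hπ0 rfl
  have osmul : ∀ (c : O) (x : V), c • x = (c : K) • x := fun _ _ => rfl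
  have hLsmul : ∀ (c : K), Valued.v c ≤ 1 → ∀ x ∈ L, c • x ∈ L := by
    intro c hc x hx
    exact L.smul_mem ⟨c, hc⟩ hx
  have hpow : ∀ (k : ℕ) (x : V), ((restrictO f) ^ k) x = (f ^ k) x := by
    intro k
    induction k with
    | zero => intro x; rfl
    | succ t ih =>
        intro x
        rw [pow_succ, pow_succ, Module.End.mul_apply, Module.End.mul_apply]
        exact ih ((restrictO f) x)
  have hcomm : ∀ p q : Polynomial K,
      (Polynomial.aeval f p) * (Polynomial.aeval f q)
        = (Polynomial.aeval f q) * (Polynomial.aeval f p) := by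
    intro p q
    rw [← map_mul, ← map_mul, mul_comm]
  have hfker : ∀ (p : Polynomial K) (j : ℕ) (x : V), Polynomial.aeval f p x = 0 →
      Polynomial.aeval f p ((f ^ j) x) = 0 := by
    intro p j x hx
    have h2 := DFunLike.congr_fun (hcomm p (Polynomial.X ^ j)) x
    rw [Module.End.mul_apply, Module.End.mul_apply, Polynomial.aeval_X_pow] at h2
    rw [h2, hx, map_zero]
  -- scaling into the lattice
  have hscale : ∀ y : V, ∃ m : ℕ, (π ^ m) • y ∈ L := by
    intro y
    have hy : y ∈ Submodule.span K (L : Set V) := by rw [hspan]; trivial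
    induction hy using Submodule.span_induction with
    | mem x hx => exact ⟨0, by simpa using hx⟩
    | zero => exact ⟨0, by simpa using L.zero_mem⟩
    | add x y hx hy ihx ihy =>
        obtain ⟨m1, h1⟩ := ihx
        obtain ⟨m2, h2⟩ := ihy
        refine ⟨m1 + m2, ?_⟩
        rw [smul_add]
        apply L.add_mem
        · have h3 : (π : K) ^ (m1+m2) • x = (π^m2) • ((π^m1) • x) := by
            rw [smul_smul]
            congr 1
            ring
          rw [h3]
          exact hLsmul _ (by rw [map_pow]; exact pow_le_one' hπle m2) _ h1
        · have h3 : (π : K) ^ (m1+m2) • y = (π^m1) • ((π^m2) • y) := by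
            rw [smul_smul]
            congr 1
            ring
          rw [h3]
          exact hLsmul _ (by rw [map_pow]; exact pow_le_one' hπle m1) _ h2
    | smul c x hx ihx =>
        obtain ⟨m, hm⟩ := ihx
        obtain ⟨t, ht⟩ : ∃ t : ℕ, Valued.v (π ^ t * c) ≤ 1 := by
          rcases eq_or_ne c 0 with rfl | hc
          · exact ⟨0, by simp⟩
          obtain ⟨k, hk⟩ := hdisc c hc
          refine ⟨(-k).toNat, ?_⟩
          rw [map_mul, map_pow, hk, ← zpow_natCast (Valued.v π), ← zpow_add₀ hπ0]
          have hnn : 0 ≤ (((-k).toNat : ℤ) + k) := by omega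
          obtain ⟨nn, hnn2⟩ : ∃ nn : ℕ, (((-k).toNat : ℤ) + k) = nn :=
            ⟨(((-k).toNat : ℤ) + k).toNat, (Int.toNat_of_nonneg hnn).symm⟩
          rw [hnn2, zpow_natCast]
          exact pow_le_one' hπle nn
        refine ⟨t + m, ?_⟩
        have h3 : (π:K)^(t+m) • (c • x) = (π^t * c) • ((π^m) • x) := by
          rw [smul_smul, smul_smul]
          congr 1
          ring
        rw [h3]
        exact hLsmul _ ht _ hm
  -- root translations
  have hB1 : ∀ ρ ∈ (χBig.map (algebraMap K (AlgebraicClosure K))).roots, 1 < w ρ :=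
    fun ρ hρ => aux_root_big π w hπ0 hπ1 (hBroots ρ hρ).2
  have hS1 : ∀ ρ ∈ (χSmall.map (algebraMap K (AlgebraicClosure K))).roots, w ρ ≤ 1 := by
    intro ρ hρ
    rcases hSroots ρ hρ with rfl | h
    · simp
    · exact aux_root_small π w hπ0 hπ1 h
  -- coprimality and Bezout
  have hcop : IsCoprime χBig χSmall := by
    apply aux_coprime_of_disjoint_roots (algebraMap K (AlgebraicClosure K)) hBmonic hSmonic
    intro ρ h1 h2
    exact absurd (hS1 ρ h2) (not_le.mpr (hB1 ρ h1))
  obtain ⟨a, b, hab⟩ := hcop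
  have hCH : Polynomial.aeval f (LinearMap.charpoly f) = 0 := LinearMap.aeval_self_charpoly f
  have hkill : ∀ (r : Polynomial K) (x : V),
      Polynomial.aeval f (r * LinearMap.charpoly f) x = 0 := by
    intro r x
    rw [map_mul, Module.End.mul_apply, hCH]
    simp
  -- dimensions
  have hdegsum : χBig.natDegree + χSmall.natDegree = Module.finrank K V := by
    rw [← Polynomial.natDegree_mul hBmonic.ne_zero hSmonic.ne_zero, ← hfact]
    exact LinearMap.charpoly_natDegree f
  have hen : χSmall.natDegree ≤ Module.finrank K V := by omega
  apply le_antisymm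
  · -- saturation ≤ Big + partial sums
    apply iSup_le
    intro k
    intro x hx
    obtain ⟨l, hl, rfl⟩ := Submodule.mem_map.mp hx
    rw [hpow k l]
    have hTker : ∀ y : V, Polynomial.aeval f χBig y = 0 →
        y ∈ Submodule.restrictScalars O (LinearMap.ker (Polynomial.aeval f χBig))
          ⊔ (⨆ j : Fin (Module.finrank K V), Submodule.map ((restrictO f) ^ (j : ℕ)) L) := by
      intro y hy
      apply Submodule.mem_sup_left
      rw [Submodule.restrictScalars_mem]
      exact LinearMap.mem_ker.mpr hy
    have hTmap : ∀ (j : ℕ), j < Module.finrank K V → ∀ y ∈ L, (f ^ j) y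
        ∈ Submodule.restrictScalars O (LinearMap.ker (Polynomial.aeval f χBig))
          ⊔ (⨆ j : Fin (Module.finrank K V), Submodule.map ((restrictO f) ^ (j : ℕ)) L) := by
      intro j hj y hy
      apply Submodule.mem_sup_right
      rw [← hpow j y]
      exact Submodule.mem_iSup_of_mem ⟨j, hj⟩ (Submodule.mem_map_of_mem hy)
    obtain ⟨pl, hpl⟩ : ∃ pl, pl = Polynomial.aeval f (b * χSmall) l := ⟨_, rfl⟩
    obtain ⟨s, hs⟩ : ∃ s, s = Polynomial.aeval f (a * χBig) l := ⟨_, rfl⟩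
    have hdecomp : l = pl + s := by
      rw [hpl, hs, ← LinearMap.add_apply, ← map_add]
      have h1 : b * χSmall + a * χBig = 1 := by rw [← hab]; ring
      rw [h1, map_one, Module.End.one_apply]
    have hplB : Polynomial.aeval f χBig pl = 0 := by
      rw [hpl, ← Module.End.mul_apply, ← map_mul]
      have h1 : χBig * (b * χSmall) = b * LinearMap.charpoly f := by rw [hfact]; ring
      rw [h1]
      exact hkill b l
    have hsS : Polynomial.aeval f χSmall s = 0 := by
      rw [hs, ← Module.End.mul_apply, ← map_mul]
      have h1 : χSmall * (a * χBig) = a * LinearMap.charpoly f := by rw [hfact]; ring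
      rw [h1]
      exact hkill a l
    rcases Nat.eq_zero_or_pos χSmall.natDegree with he0 | hepos
    · -- χSmall = 1, so s = 0 and l is in the kernel part
      have hχ1 : χSmall = 1 := (hSmonic.natDegree_eq_zero).mp he0
      have hs0 : s = 0 := by
        have h1 := hsS
        rw [hχ1, map_one, Module.End.one_apply] at h1
        exact h1
      have hlpl : l = pl := by rw [hdecomp, hs0, add_zero]
      apply hTker
      apply hfker χBig k l
      rw [hlpl]
      exact hplB
    · set M := Submodule.span O (Set.range fun j : Fin χSmall.natDegree => (f ^ (j:ℕ)) s)
        with hM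
      have hScoeff : ∀ i, Valued.v (χSmall.coeff i) ≤ 1 :=
        aux_small_coeff_le_one w hw χSmall hSmonic hS1
      have hrel : (f ^ χSmall.natDegree) s
          = -(∑ i ∈ Finset.range χSmall.natDegree, χSmall.coeff i • (f ^ i) s) := by
        have happ := DFunLike.congr_fun (Polynomial.aeval_eq_sum_range (p := χSmall) f) s
        rw [hsS] at happ
        simp only [LinearMap.sum_apply, LinearMap.smul_apply] at happ
        rw [Finset.sum_range_succ, hSmonic.coeff_natDegree, one_smul] at happ
        exact eq_neg_of_add_eq_zero_right happ.symm
      have hMmem : ∀ j : ℕ, (f ^ j) s ∈ M := by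
        intro j
        induction j using Nat.strong_induction_on with
        | _ j ih =>
          rcases lt_or_ge j χSmall.natDegree with hj | hj
          · exact Submodule.subset_span ⟨⟨j, hj⟩, rfl⟩
          · have hexp : j - χSmall.natDegree + χSmall.natDegree = j := by omega
            have h1 : (f ^ j) s = (f ^ (j - χSmall.natDegree)) ((f ^ χSmall.natDegree) s) := by
              rw [← Module.End.mul_apply, ← pow_add, hexp]
            rw [h1, hrel, map_neg, map_sum]
            apply M.neg_mem
            apply Submodule.sum_mem
            intro i hi
            have hilt := Finset.mem_range.mp hi
            rw [map_smul, ← Module.End.mul_apply, ← pow_add]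
            have hlt2 : j - χSmall.natDegree + i < j := by omega
            have heq : χSmall.coeff i • (f ^ (j - χSmall.natDegree + i)) s
                = (⟨χSmall.coeff i, hScoeff i⟩ : O) • (f ^ (j - χSmall.natDegree + i)) s := rfl
            rw [heq]
            exact M.smul_mem _ (ih _ hlt2)
      have hMT : M ≤ Submodule.restrictScalars O (LinearMap.ker (Polynomial.aeval f χBig))
          ⊔ (⨆ j : Fin (Module.finrank K V), Submodule.map ((restrictO f) ^ (j : ℕ)) L) := by
        rw [hM]
        apply Submodule.span_le.mpr
        rintro y ⟨j, rfl⟩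
        dsimp only
        have hsy : (f ^ (j:ℕ)) s = (f ^ (j:ℕ)) l - (f ^ (j:ℕ)) pl := by
          rw [← map_sub]
          congr 1
          rw [hdecomp]
          abel
        rw [hsy]
        apply Submodule.sub_mem
        · exact hTmap (j:ℕ) (lt_of_lt_of_le j.2 hen) l hl
        · exact hTker _ (hfker χBig (j:ℕ) pl hplB)
      have hfin : (f ^ k) l = (f ^ k) pl + (f ^ k) s := by
        rw [← map_add, ← hdecomp]
      rw [hfin]
      exact Submodule.add_mem _ (hTker _ (hfker χBig k pl hplB)) (hMT (hMmem k))
  · -- Big + partial sums ≤ saturation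
    apply sup_le
    · -- the kernel of χBig(f) is contained in the saturation
      intro x₀ hx₀
      rw [Submodule.restrictScalars_mem, LinearMap.mem_ker] at hx₀
      rcases Nat.eq_zero_or_pos χBig.natDegree with hd0 | hdpos
      · have hχ1 : χBig = 1 := (hBmonic.natDegree_eq_zero).mp hd0
        rw [hχ1, map_one, Module.End.one_apply] at hx₀
        rw [hx₀]
        exact Submodule.zero_mem _
      · obtain ⟨ha1, hlt⟩ := aux_big_coeff_lt w hw χBig hBmonic hdpos hB1
        have ha0 : χBig.coeff 0 ≠ 0 := by
          intro h
          rw [h, map_zero] at ha1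
          exact absurd ha1 (by simp)
        set d := χBig.natDegree with hd
        set a₀ := χBig.coeff 0 with ha₀
        set P := -(Polynomial.C a₀⁻¹ * χBig.divX) with hP
        set u := Polynomial.aeval f P with hu
        have hXP : (Polynomial.X : Polynomial K) * P
            = 1 - Polynomial.C a₀⁻¹ * χBig := by
          have h1 : (Polynomial.X : Polynomial K) * χBig.divX = χBig - Polynomial.C a₀ := by
            rw [eq_sub_iff_add_eq, ha₀]
            exact Polynomial.X_mul_divX_add χBig
          rw [hP]
          calc (Polynomial.X : Polynomial K) * -(Polynomial.C a₀⁻¹ * χBig.divX)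
              = -(Polynomial.C a₀⁻¹ * (Polynomial.X * χBig.divX)) := by ring
            _ = -(Polynomial.C a₀⁻¹ * (χBig - Polynomial.C a₀)) := by rw [h1]
            _ = Polynomial.C a₀⁻¹ * Polynomial.C a₀ - Polynomial.C a₀⁻¹ * χBig := by ring
            _ = 1 - Polynomial.C a₀⁻¹ * χBig := by
                rw [← Polynomial.C_mul, inv_mul_cancel₀ ha0, Polynomial.C_1]
        have hCsmul : ∀ (c : K) (q : Polynomial K) (y : V),
            Polynomial.aeval f (Polynomial.C c * q) y = c • (Polynomial.aeval f q y) := by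
          intro c q y
          rw [map_mul, Polynomial.aeval_C, Module.End.mul_apply, Module.algebraMap_end_apply]
        have hfu : ∀ y : V, Polynomial.aeval f χBig y = 0 → f (u y) = y := by
          intro y hy
          have h1 : f (u y) = Polynomial.aeval f (Polynomial.X * P) y := by
            rw [map_mul, Polynomial.aeval_X, Module.End.mul_apply, hu]
          rw [h1, hXP, map_sub, map_one, LinearMap.sub_apply, Module.End.one_apply, hCsmul,
            hy, smul_zero, sub_zero]
        have hkerB : ∀ y, Polynomial.aeval f χBig y = 0 →
            Polynomial.aeval f χBig (u y) = 0 := by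
          intro y hy
          have h1 : Polynomial.aeval f χBig (u y) = u (Polynomial.aeval f χBig y) := by
            rw [hu, ← Module.End.mul_apply, ← Module.End.mul_apply, hcomm]
          rw [h1, hy, map_zero]
        have hukerB : ∀ (j : ℕ) (y), Polynomial.aeval f χBig y = 0 →
            Polynomial.aeval f χBig ((u ^ j) y) = 0 := by
          intro j
          induction j with
          | zero => intro y hy; simpa using hy
          | succ t ih =>
              intro y hy
              rw [pow_succ', Module.End.mul_apply]
              exact hkerB _ (ih y hy)
        have hukB : ∀ (j : ℕ) (y), Polynomial.aeval f χBig y = 0 →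
            Polynomial.aeval f χBig (u ((u ^ j) y)) = 0 := by
          intro j y hy
          exact hkerB _ (hukerB j y hy)
        have hfu_pow : ∀ (j : ℕ) (y), Polynomial.aeval f χBig y = 0 →
            (f ^ j) ((u ^ j) y) = y := by
          intro j
          induction j with
          | zero => intro y _; simp
          | succ t ih =>
              intro y hy
              rw [pow_succ' u t, Module.End.mul_apply, pow_succ f t, Module.End.mul_apply,
                hfu _ (hukerB t y hy)]
              exact ih y hy
        have hsum_ker : ∀ y, Polynomial.aeval f χBig y = 0 →
            ∑ j ∈ Finset.range d, χBig.coeff (j+1) • (f ^ (j+1)) y = -(a₀ • y) := by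
          intro y hy
          have hs2 := DFunLike.congr_fun (Polynomial.aeval_eq_sum_range (p := χBig) f) y
          rw [hy] at hs2
          simp only [LinearMap.sum_apply, LinearMap.smul_apply] at hs2
          rw [Finset.sum_range_succ'] at hs2
          rw [pow_zero, Module.End.one_apply] at hs2
          exact eq_neg_of_add_eq_zero_left hs2.symm
        have hinj : ∀ y, Polynomial.aeval f χBig y = 0 → f y = 0 → y = 0 := by
          intro y hy hfy
          have hs2 := hsum_ker y hy
          have hz : ∀ j ∈ Finset.range d, χBig.coeff (j+1) • (f ^ (j+1)) y = 0 := by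
            intro j _
            rw [pow_succ, Module.End.mul_apply, hfy, map_zero, smul_zero]
          rw [Finset.sum_eq_zero hz] at hs2
          have h4 : a₀ • y = 0 := neg_eq_zero.mp hs2.symm
          rcases smul_eq_zero.mp h4 with h5 | h5
          · exact absurd h5 ha0
          · exact h5
        have hinjk : ∀ (j : ℕ) (y), Polynomial.aeval f χBig y = 0 → (f ^ j) y = 0 → y = 0 := by
          intro j
          induction j with
          | zero => intro y _ h; simpa using h
          | succ t ih =>
              intro y hy h
              have hy' : Polynomial.aeval f χBig (f y) = 0 := by
                have h6 := hfker χBig 1 y hy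
                rwa [pow_one] at h6
              have h7 : (f ^ t) (f y) = 0 := by
                rw [← Module.End.mul_apply, ← pow_succ]
                exact h
              exact hinj y hy (ih (f y) hy' h7)
        have hU4 : ∀ y, Polynomial.aeval f χBig y = 0 →
            (u ^ d) y = ∑ k ∈ Finset.range d,
              (-(a₀⁻¹ * χBig.coeff (d - k))) • (u ^ k) y := by
          intro y hy
          set Δ := (u ^ d) y - ∑ k ∈ Finset.range d,
              (-(a₀⁻¹ * χBig.coeff (d - k))) • (u ^ k) y with hΔ
          have hΔker : Polynomial.aeval f χBig Δ = 0 := by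
            rw [hΔ, map_sub, map_sum, hukerB d y hy]
            have h8 : ∀ k ∈ Finset.range d,
                Polynomial.aeval f χBig ((-(a₀⁻¹ * χBig.coeff (d - k))) • (u ^ k) y) = 0 := by
              intro k _
              rw [map_smul, hukerB k y hy, smul_zero]
            rw [Finset.sum_eq_zero h8]
            simp
          have hfd : (f ^ d) Δ = 0 := by
            rw [hΔ, map_sub, map_sum, hfu_pow d y hy]
            have hterm : ∀ k ∈ Finset.range d,
                (f ^ d) ((-(a₀⁻¹ * χBig.coeff (d - k))) • (u ^ k) y)
                = (-(a₀⁻¹ * χBig.coeff (d - k))) • (f ^ (d - k)) y := by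
              intro k hk
              have hkd : d - k + k = d := by
                have := Finset.mem_range.mp hk
                omega
              rw [map_smul]
              congr 1
              conv_lhs => rw [← hkd]
              rw [pow_add, Module.End.mul_apply, hfu_pow k y hy]
            rw [Finset.sum_congr rfl hterm]
            have hre : ∑ k ∈ Finset.range d, (-(a₀⁻¹ * χBig.coeff (d - k))) • (f ^ (d - k)) y
                = -(a₀⁻¹ • ∑ k ∈ Finset.range d, χBig.coeff (d - k) • (f ^ (d - k)) y) := by
              rw [Finset.smul_sum, ← Finset.sum_neg_distrib]
              apply Finset.sum_congr rfl
              intro k _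
              rw [smul_smul, neg_smul]
            have hre2 : ∑ k ∈ Finset.range d, χBig.coeff (d - k) • (f ^ (d - k)) y
                = ∑ j ∈ Finset.range d, χBig.coeff (j+1) • (f ^ (j+1)) y := by
              have h9 : ∀ k ∈ Finset.range d, χBig.coeff (d - k) • (f ^ (d - k)) y
                  = χBig.coeff ((d - 1 - k) + 1) • (f ^ ((d - 1 - k) + 1)) y := by
                intro k hk
                have := Finset.mem_range.mp hk
                have h10 : d - k = d - 1 - k + 1 := by omega
                rw [h10]
              rw [Finset.sum_congr rfl h9,
                Finset.sum_range_reflect (fun j => χBig.coeff (j+1) • (f ^ (j+1)) y) d]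
            rw [hre, hre2, hsum_ker y hy, smul_neg, neg_neg, smul_smul,
              inv_mul_cancel₀ ha0, one_smul, sub_self]
          have hzero := hinjk d Δ hΔker hfd
          rw [hΔ] at hzero
          exact sub_eq_zero.mp hzero
        have hγlt : ∀ k, k < d → Valued.v (-(a₀⁻¹ * χBig.coeff (d - k))) < 1 := by
          intro k hk
          rw [Valuation.map_neg, map_mul, map_inv₀, inv_mul_eq_div]
          have h1 : Valued.v (χBig.coeff (d - k)) < Valued.v a₀ := hlt (d - k) (by omega)
          have h2 : (0:ℝ≥0) < Valued.v a₀ := lt_trans zero_lt_one ha1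
          exact (div_lt_one h2).mpr h1
        have hδval : ∀ k, k < d →
            Valued.v ((-(a₀⁻¹ * χBig.coeff (d - k))) / π) ≤ 1 := by
          intro k hk
          rw [map_div₀]
          exact (div_le_one hπpos).mpr (aux_val_le_pi π hπ (hγlt k hk))
        set N := Submodule.span O (Set.range fun k : Fin d => (u ^ (k:ℕ)) x₀) with hN
        have hNgen : ∀ k, k < d → (u ^ k) x₀ ∈ N :=
          fun k hk => Submodule.subset_span ⟨⟨k, hk⟩, rfl⟩
        have hNA : ∀ j : ℕ, (u ^ j) x₀ ∈ N := by
          intro j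
          induction j using Nat.strong_induction_on with
          | _ j ih =>
            rcases lt_or_ge j d with hj | hj
            · exact hNgen j hj
            · have hexp : j - d + d = j := by omega
              have h1 : (u ^ j) x₀ = (u ^ (j - d)) ((u ^ d) x₀) := by
                rw [← Module.End.mul_apply, ← pow_add, hexp]
              rw [h1, hU4 x₀ hx₀, map_sum]
              apply Submodule.sum_mem
              intro k hk
              have hkd := Finset.mem_range.mp hk
              rw [map_smul, ← Module.End.mul_apply, ← pow_add]
              have hlt2 : j - d + k < j := by omega
              have heq : (-(a₀⁻¹ * χBig.coeff (d - k))) • (u ^ (j - d + k)) x₀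
                  = (⟨-(a₀⁻¹ * χBig.coeff (d - k)), le_of_lt (hγlt k hkd)⟩ : O)
                    • (u ^ (j - d + k)) x₀ := rfl
              rw [heq]
              exact N.smul_mem _ (ih _ hlt2)
        have hclaimB : ∀ y ∈ N, ∃ z ∈ N, (u ^ d) y = π • z := by
          intro y hy
          induction hy using Submodule.span_induction with
          | mem x hx =>
              obtain ⟨k, rfl⟩ := hx
              dsimp only
              refine ⟨∑ j ∈ Finset.range d,
                ((-(a₀⁻¹ * χBig.coeff (d - j))) / π) • (u ^ ((k:ℕ) + j)) x₀, ?_, ?_⟩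
              · apply Submodule.sum_mem
                intro j hj
                have hjd := Finset.mem_range.mp hj
                have heq : ((-(a₀⁻¹ * χBig.coeff (d - j))) / π) • (u ^ ((k:ℕ) + j)) x₀
                    = (⟨(-(a₀⁻¹ * χBig.coeff (d - j))) / π, hδval j hjd⟩ : O)
                      • (u ^ ((k:ℕ) + j)) x₀ := rfl
                rw [heq]
                exact N.smul_mem _ (hNA _)
              · have h1 : (u ^ d) ((u ^ (k:ℕ)) x₀) = (u ^ (k:ℕ)) ((u ^ d) x₀) := by
                  rw [← Module.End.mul_apply, ← Module.End.mul_apply, ← pow_add, ← pow_add,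
                    Nat.add_comm]
                rw [h1, hU4 x₀ hx₀, map_sum, Finset.smul_sum]
                apply Finset.sum_congr rfl
                intro j _
                rw [map_smul, ← Module.End.mul_apply, ← pow_add, smul_smul]
                congr 1
                rw [mul_comm π _, div_mul_cancel₀ _ hπne]
          | zero => exact ⟨0, N.zero_mem, by simp⟩
          | add x y hx hy ihx ihy =>
              obtain ⟨z1, hz1, he1⟩ := ihx
              obtain ⟨z2, hz2, he2⟩ := ihy
              exact ⟨z1 + z2, N.add_mem hz1 hz2, by rw [map_add, he1, he2, smul_add]⟩
          | smul c x hx ihx =>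
              obtain ⟨z, hz, he⟩ := ihx
              refine ⟨c • z, N.smul_mem c hz, ?_⟩
              rw [show (c • x : V) = (c:K) • x from rfl, map_smul, he, smul_comm]
              rfl
        have hclaimC : ∀ t : ℕ, ∃ z ∈ N, (u ^ (d * t)) x₀ = (π ^ t) • z := by
          intro t
          induction t with
          | zero =>
              refine ⟨x₀, ?_, by simp⟩
              have := hNgen 0 hdpos
              simpa using this
          | succ t ih =>
              obtain ⟨z, hz, hzeq⟩ := ih
              obtain ⟨z', hz', hzeq'⟩ := hclaimB z hz
              refine ⟨z', hz', ?_⟩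
              rw [show d * (t+1) = d + d * t by ring, pow_add, Module.End.mul_apply,
                hzeq, map_smul, hzeq', smul_smul, ← pow_succ]
        choose mfun hmfun using fun k : Fin d => hscale ((u ^ (k:ℕ)) x₀)
        set m := Finset.univ.sup mfun with hm
        have hgenL : ∀ k : Fin d, (π ^ m) • ((u ^ (k:ℕ)) x₀) ∈ L := by
          intro k
          have hle : mfun k ≤ m := Finset.le_sup (Finset.mem_univ k)
          have h1 : (π:K) ^ m • ((u ^ (k:ℕ)) x₀)
              = (π ^ (m - mfun k)) • ((π ^ (mfun k)) • ((u ^ (k:ℕ)) x₀)) := by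
            have hexp : m - mfun k + mfun k = m := by omega
            rw [smul_smul, ← pow_add, hexp]
          rw [h1]
          exact hLsmul _ (by rw [map_pow]; exact pow_le_one' hπle _) _ (hmfun k)
        have hNL : ∀ y ∈ N, (π ^ m) • y ∈ L := by
          intro y hy
          induction hy using Submodule.span_induction with
          | mem x hx =>
              obtain ⟨k, rfl⟩ := hx
              exact hgenL k
          | zero => rw [smul_zero]; exact L.zero_mem
          | add x y hx hy ihx ihy => rw [smul_add]; exact L.add_mem ihx ihy
          | smul c x hx ihx =>
              rw [show (c • x : V) = (c:K) • x from rfl, smul_comm]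
              exact L.smul_mem c ihx
        obtain ⟨z, hz, hzeq⟩ := hclaimC m
        have hL1 : (u ^ (d * m)) x₀ ∈ L := by
          rw [hzeq]
          exact hNL z hz
        refine Submodule.mem_iSup_of_mem (d * m) ?_
        rw [show x₀ = (f ^ (d * m)) ((u ^ (d * m)) x₀) from (hfu_pow (d * m) x₀ hx₀).symm,
          ← hpow (d * m) ((u ^ (d * m)) x₀)]
        exact Submodule.mem_map_of_mem hL1
    · apply iSup_le
      intro k
      exact le_iSup (fun j : ℕ => Submodule.map ((restrictO f) ^ j) L) (k : ℕ)
end
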